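/- Let A₁, B₁, C₁ be symmetric n×n real matrices and A₂, B₂, C₂ symmetric m×m real matrices, with C₁ negative definite and C₂ positive definite. Suppose u ∈ ℝⁿ, v ∈ ℝᵐ are nonzero and λ ∈ ℝ satisfies (A₁⊗C₂ − C₁⊗A₂)(u⊗v) + λ(B₁⊗C₂ − C₁⊗B₂)(u⊗v) = 0. Then there exists μ ∈ ℝ such that (A₁ + λB₁ + μC₁)u = 0 and (A₂ + λB₂ + μC₂)v = 0. -/

import Mathlib

open Matrix Kronecker

lemma kron_mulVec_rankOne {n m : ℕ} (X : Matrix (Fin n) (Fin n) ℝ)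
    (Y : Matrix (Fin m) (Fin m) ℝ) (u : Fin n → ℝ) (v : Fin m → ℝ) :
    (X ⊗ₖ Y).mulVec (fun p => u p.1 * v p.2)
      = fun p => X.mulVec u p.1 * Y.mulVec v p.2 := by
  ext p
  simp only [Matrix.mulVec, dotProduct, kroneckerMap_apply, Fintype.sum_prod_type,
    Finset.sum_mul_sum]
  refine Finset.sum_congr rfl fun i _ => Finset.sum_congr rfl fun j _ => by ring

lemma posDef_mulVec_ne_zero {k : ℕ} {M : Matrix (Fin k) (Fin k) ℝ} (hM : M.PosDef)
    {x : Fin k → ℝ} (hx : x ≠ 0) : M.mulVec x ≠ 0 := by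
  intro h
  have := hM.dotProduct_mulVec_pos hx
  rw [h] at this
  simp at this

/-- A rank-one eigenvector `u ⊗ v` of `M₁(X) + λM₀(X) = 0` yields a solution of the
two-parameter eigenvalue problem. -/
theorem stmt_3 {n m : ℕ}
    (A₁ B₁ C₁ : Matrix (Fin n) (Fin n) ℝ) (A₂ B₂ C₂ : Matrix (Fin m) (Fin m) ℝ)
    (hA₁ : A₁.IsSymm) (hB₁ : B₁.IsSymm) (hC₁ : C₁.IsSymm)
    (hA₂ : A₂.IsSymm) (hB₂ : B₂.IsSymm) (hC₂ : C₂.IsSymm)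
    (hC₁neg : (-C₁).PosDef) (hC₂pos : C₂.PosDef)
    (u : Fin n → ℝ) (v : Fin m → ℝ) (hu : u ≠ 0) (hv : v ≠ 0) (lam : ℝ)
    (w : Fin n × Fin m → ℝ) (hw : w = fun p => u p.1 * v p.2)
    (heig : (A₁ ⊗ₖ C₂ - C₁ ⊗ₖ A₂).mulVec w
        + lam • (B₁ ⊗ₖ C₂ - C₁ ⊗ₖ B₂).mulVec w = 0) :
    ∃ mu : ℝ, (A₁ + lam • B₁ + mu • C₁).mulVec u = 0 ∧
      (A₂ + lam • B₂ + mu • C₂).mulVec v = 0 := by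
  subst hw
  set a : Fin n → ℝ := (A₁ + lam • B₁).mulVec u with ha
  set b : Fin m → ℝ := C₂.mulVec v with hb
  set c : Fin n → ℝ := C₁.mulVec u with hc
  set d : Fin m → ℝ := (A₂ + lam • B₂).mulVec v with hd
  have key : ∀ i j, a i * b j = c i * d j := by
    intro i j
    have h := congrFun heig (i, j)
    simp only [Matrix.sub_mulVec, kron_mulVec_rankOne, Pi.add_apply, Pi.sub_apply,
      Pi.smul_apply, smul_eq_mul, Pi.zero_apply] at h
    simp only [ha, hd, Matrix.add_mulVec, Matrix.smul_mulVec, Pi.add_apply,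
      Pi.smul_apply, smul_eq_mul, hb, hc]
    linear_combination h
  have hbne : b ≠ 0 := posDef_mulVec_ne_zero hC₂pos hv
  have hcne : c ≠ 0 := by
    intro h
    exact posDef_mulVec_ne_zero hC₁neg hu (by rw [Matrix.neg_mulVec, ← hc, h, neg_zero])
  obtain ⟨j, hj⟩ := Function.ne_iff.mp hbne
  obtain ⟨i₀, hi₀⟩ := Function.ne_iff.mp hcne
  simp only [Pi.zero_apply] at hj hi₀
  refine ⟨-(d j / b j), ?_, ?_⟩
  · ext i
    have h2 : a i = d j / b j * c i := by
      have h1 := key i j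
      field_simp
      linear_combination h1
    rw [Matrix.add_mulVec, Matrix.smul_mulVec]
    show (a + (-(d j / b j)) • c) i = 0
    simp only [Pi.add_apply, Pi.smul_apply, smul_eq_mul]
    rw [h2]; ring
  · ext k
    have h2 : a i₀ = d j / b j * c i₀ := by
      have h1 := key i₀ j
      field_simp
      linear_combination h1
    have hdk : d k = d j / b j * b k := by
      refine mul_left_cancel₀ hi₀ ?_
      rw [← key i₀ k, h2]; ring
    rw [Matrix.add_mulVec, Matrix.smul_mulVec]
    show (d + (-(d j / b j)) • b) k = 0
    simp only [Pi.add_apply, Pi.smul_apply, smul_eq_mul]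
    rw [hdk]; ring
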